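/- If ψ : ℝ → ℂ² solves the free time-independent Lévy-Leblond equation with γ₊-eigenvalue E, then the function P̂ψ = −iψ′ also solves the free time-independent Lévy-Leblond equation with the same γ₊-eigenvalue E. (In particular, ψ′ is itself differentiable, since by the eigenvalue equation ψ′(x) = (iEγ₊ + iβγ₋)ψ(x).) -/

import Mathlib

open Matrix

noncomputable section

/-- The gamma matrix `γ¹ = [[1,0],[0,−1]]`. -/
def γ1 : Matrix (Fin 2) (Fin 2) ℂ := !![1, 0; 0, -1]

/-- The gamma matrix `γ₊ = [[0,1],[0,0]]`. -/
def γp : Matrix (Fin 2) (Fin 2) ℂ := !![0, 1; 0, 0]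

/-- The gamma matrix `γ₋ = [[0,0],[1,0]]`. -/
def γm : Matrix (Fin 2) (Fin 2) ℂ := !![0, 0; 1, 0]

/-- `ψ : ℝ → ℂ²` solves the free time-independent Lévy-Leblond equation
with `γ₊`-eigenvalue `E`: `ψ` is differentiable and
`β γ₋ ψ(x) − i γ¹ ψ′(x) = E γ₊ ψ(x)` for all `x`. -/
def SolvesLL (β E : ℝ) (ψ : ℝ → (Fin 2 → ℂ)) : Prop :=
  Differentiable ℝ ψ ∧
    ∀ x : ℝ, (β : ℂ) • γm.mulVec (ψ x) - Complex.I • γ1.mulVec (deriv ψ x)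
      = (E : ℂ) • γp.mulVec (ψ x)

/-- The operator `P̂`: `(P̂ψ)(x) = −i ψ′(x)`. -/
def Phat (ψ : ℝ → (Fin 2 → ℂ)) : ℝ → (Fin 2 → ℂ) :=
  fun x => (-Complex.I) • deriv ψ x

/-- The operator `D₊`: `(D₊ψ)(x) = −(1/β) γ₊ ψ″(x) + β γ₋ ψ(x)`. -/
def Dplus (β : ℝ) (ψ : ℝ → (Fin 2 → ℂ)) : ℝ → (Fin 2 → ℂ) :=
  fun x => (-(1 / (β : ℂ))) • γp.mulVec (deriv (deriv ψ) x) + (β : ℂ) • γm.mulVec (ψ x)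

/-- The operator `P¹`: `(P¹ψ)(x) = γ¹ ψ(−x)`. -/
def P1 (ψ : ℝ → (Fin 2 → ℂ)) : ℝ → (Fin 2 → ℂ) :=
  fun x => γ1.mulVec (ψ (-x))

/-- If `ψ` solves the free time-independent Lévy-Leblond equation
with `γ₊`-eigenvalue `E`, then so does `P̂ψ = −iψ′`. -/
theorem solvesLL_Phat (β : ℝ) (hβ : 0 < β) (E : ℝ)
    (ψ : ℝ → (Fin 2 → ℂ)) (hψ : SolvesLL β E ψ) :
    SolvesLL β E (Phat ψ) := by
  obtain ⟨hdiff, heq⟩ := hψ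
  set A : Matrix (Fin 2) (Fin 2) ℂ := Complex.I • ((β : ℂ) • γm + (E : ℂ) • γp) with hA
  set L : (Fin 2 → ℂ) →L[ℝ] (Fin 2 → ℂ) :=
    LinearMap.toContinuousLinearMap (A.mulVecLin.restrictScalars ℝ) with hL
  have hLapp : ∀ v, L v = A.mulVec v := fun v => rfl
  -- closed form for the derivative
  have hd : ∀ x, deriv ψ x = L (ψ x) := by
    intro x
    have h0 := congrFun (heq x) 0
    have h1 := congrFun (heq x) 1
    simp [γ1, γm, γp, Matrix.mulVec, dotProduct, Fin.sum_univ_two] at h0 h1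
    funext i
    fin_cases i <;>
      simp [hLapp, hA, γ1, γm, γp, Matrix.mulVec, dotProduct, Fin.sum_univ_two]
    · linear_combination Complex.I * h0 + deriv ψ x 0 * Complex.I_sq
    · linear_combination -Complex.I * h1 + deriv ψ x 1 * Complex.I_sq
  have hdfun : deriv ψ = fun x => L (ψ x) := funext hd
  have hdiff2 : Differentiable ℝ (deriv ψ) := by
    rw [hdfun]; exact L.differentiable.comp hdiff
  have hdd : ∀ x, deriv (deriv ψ) x = L (deriv ψ x) := by
    intro x
    have : HasDerivAt (fun x => L (ψ x)) (L (deriv ψ x)) x :=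
      (L.hasFDerivAt).comp_hasDerivAt x (hdiff x).hasDerivAt
    conv_lhs => rw [hdfun]
    exact this.deriv
  constructor
  · unfold Phat
    exact fun x => ((hdiff2 x).hasDerivAt.const_smul (-Complex.I)).differentiableAt
  · intro x
    have hPd : deriv (Phat ψ) x = (-Complex.I) • deriv (deriv ψ) x := by
      unfold Phat
      exact ((hdiff2 x).hasDerivAt.const_smul (-Complex.I)).deriv
    have key : (β : ℂ) • γm.mulVec (deriv ψ x) -
        Complex.I • γ1.mulVec (A.mulVec (deriv ψ x))
        = (E : ℂ) • γp.mulVec (deriv ψ x) := by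
      funext i
      fin_cases i <;>
        · simp [hA, γ1, γm, γp, Matrix.mulVec, dotProduct, Fin.sum_univ_two]
          ring_nf
          simp [Complex.I_sq]
    rw [hPd, hdd x, hLapp]
    simp only [Phat]
    calc (β : ℂ) • γm.mulVec ((-Complex.I) • deriv ψ x) -
          Complex.I • γ1.mulVec ((-Complex.I) • A.mulVec (deriv ψ x))
        = (-Complex.I) • ((β : ℂ) • γm.mulVec (deriv ψ x) -
            Complex.I • γ1.mulVec (A.mulVec (deriv ψ x))) := by
          rw [Matrix.mulVec_smul, Matrix.mulVec_smul]
          module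
      _ = (-Complex.I) • ((E : ℂ) • γp.mulVec (deriv ψ x)) := by rw [key]
      _ = (E : ℂ) • γp.mulVec ((-Complex.I) • deriv ψ x) := by
          rw [Matrix.mulVec_smul]; module

end
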